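/- There exist a probability space, binary random variables L_1, A, and a random variable L_2 = L_1 + A, with two regimes o (P_o(A=0)=1) and s (P_s(A=1)=1), L_1 uniform on {0,1} in both regimes, such that: (i) the extended conditional independence L_2 ⫫ σ | (L_1, A) holds (there is a common version of E[L_2 | L_1, A] valid in both regimes); yet (ii) there exist random variables W_o (equal to L_1 if A=0, and 0 if A=1) and W_s (equal to 2 if A=0, and L_1+1 if A=1) such that W_o is a version of E[L_2 | L_1, A; o], W_s is a version of E[L_2 | L_1, A; s], but W_o ≠ W_s almost surely under both P_o and P_s, and neither W_o nor W_s is a valid version in both regimes simultaneously. -/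

import Mathlib

open MeasureTheory

open scoped Classical in
/-- Specification of Counter-example 2: binary `L₁`, `A` with `L₂ = L₁ + A`, regime `o` with
`A = 0` a.s. and regime `s` with `A = 1` a.s., `L₁` uniform on `{0,1}` in both regimes.
The extended conditional independence `L₂ ⫫ σ | (L₁, A)` holds (a common version of
`E[L₂ | L₁, A]` exists for both regimes), yet the particular versions
`W_o = L₁·1{A=0}` and `W_s = 2·1{A=0} + (L₁+1)·1{A=1}` valid in regimes `o` and `s`
respectively differ a.s. in both regimes, and neither is valid in both regimes at once. -/
def VersionCounterexampleSpec (Ω : Type) [MeasurableSpace Ω] (Po Ps : Measure Ω)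
    (L₁ A : Ω → ℝ) : Prop :=
  IsProbabilityMeasure Po ∧ IsProbabilityMeasure Ps ∧
  Measurable L₁ ∧ Measurable A ∧
  (∀ ω, L₁ ω = 0 ∨ L₁ ω = 1) ∧ (∀ ω, A ω = 0 ∨ A ω = 1) ∧
  -- regime o never treats, regime s always treats
  (∀ᵐ ω ∂Po, A ω = 0) ∧ (∀ᵐ ω ∂Ps, A ω = 1) ∧
  -- L₁ is uniform on {0,1} in both regimes
  Po {ω | L₁ ω = 0} = 1 / 2 ∧ Po {ω | L₁ ω = 1} = 1 / 2 ∧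
  Ps {ω | L₁ ω = 0} = 1 / 2 ∧ Ps {ω | L₁ ω = 1} = 1 / 2 ∧
  -- with L₂ := L₁ + A and the σ-algebra generated by (L₁, A):
  (let L₂ : Ω → ℝ := fun ω => L₁ ω + A ω
   let m : MeasurableSpace Ω := MeasurableSpace.comap (fun ω => (L₁ ω, A ω)) inferInstance
   let Wo : Ω → ℝ := fun ω => if A ω = 0 then L₁ ω else 0
   let Ws : Ω → ℝ := fun ω => if A ω = 0 then 2 else L₁ ω + 1
   -- (i) extended conditional independence L₂ ⫫ σ | (L₁, A): a common version exists
   (∃ w : ℝ × ℝ → ℝ, Measurable w ∧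
      (fun ω => w (L₁ ω, A ω)) =ᵐ[Po] Po[L₂ | m] ∧
      (fun ω => w (L₁ ω, A ω)) =ᵐ[Ps] Ps[L₂ | m]) ∧
   -- (ii) W_o is a version under P_o, W_s is a version under P_s
   Wo =ᵐ[Po] Po[L₂ | m] ∧
   Ws =ᵐ[Ps] Ps[L₂ | m] ∧
   -- but W_o ≠ W_s almost surely under both regimes
   (∀ᵐ ω ∂Po, Wo ω ≠ Ws ω) ∧
   (∀ᵐ ω ∂Ps, Wo ω ≠ Ws ω) ∧
   -- and neither supplies a version simultaneously valid in both regimes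
   ¬ Wo =ᵐ[Ps] Ps[L₂ | m] ∧
   ¬ Ws =ᵐ[Po] Po[L₂ | m])

noncomputable def Pm (b : Bool) : Measure (Bool × Bool) :=
  (2 : ENNReal)⁻¹ • (Measure.dirac (false, b) + Measure.dirac (true, b))

instance (b : Bool) : IsProbabilityMeasure (Pm b) := by
  constructor
  simp [Pm, Measure.dirac_apply]
  exact ENNReal.inv_two_add_inv_two

lemma ae_Pm {b : Bool} {P : Bool × Bool → Prop} (h1 : P (false, b)) (h2 : P (true, b)) :
    ∀ᵐ ω ∂(Pm b), P ω := by
  rw [ae_iff]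
  simp [Pm, Measure.dirac_apply, Set.indicator_apply, h1, h2]

lemma Pm_L1 (b v : Bool) :
    Pm b {ω : Bool × Bool | (if ω.1 then (1:ℝ) else 0) = (if v then 1 else 0)} = 1 / 2 := by
  have : {ω : Bool × Bool | (if ω.1 then (1:ℝ) else 0) = (if v then 1 else 0)}
      = {ω : Bool × Bool | ω.1 = v} := by
    ext ω; cases ω.1 <;> cases v <;> simp
  rw [this]
  cases v <;> simp [Pm, Measure.dirac_apply, Set.indicator_apply, one_div]

noncomputable def CL₁ : Bool × Bool → ℝ := fun ω => if ω.1 then 1 else 0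
noncomputable def CA : Bool × Bool → ℝ := fun ω => if ω.2 then 1 else 0

lemma condexp_eq (b : Bool) :
    (Pm b)[fun ω => CL₁ ω + CA ω |
      MeasurableSpace.comap (fun ω => (CL₁ ω, CA ω)) inferInstance] =
    fun ω => CL₁ ω + CA ω := by
  have hmle : MeasurableSpace.comap (fun ω => (CL₁ ω, CA ω)) inferInstance
      ≤ Prod.instMeasurableSpace := fun s _ => MeasurableSet.of_discrete
  have hpair : Measurable[MeasurableSpace.comap (fun ω => (CL₁ ω, CA ω)) inferInstance]
      (fun ω => (CL₁ ω, CA ω)) := measurable_iff_comap_le.mpr le_rfl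
  exact condExp_of_stronglyMeasurable hmle
    ((measurable_fst.add measurable_snd).comp hpair).stronglyMeasurable .of_finite

/-- Counter-example 2 exists: without positivity, an arbitrary version of a conditional
expectation computed under one regime need not serve as a version under the other, even
though a common version exists. -/
theorem exists_version_counterexample :
    ∃ (Ω : Type) (_ : MeasurableSpace Ω) (Po Ps : Measure Ω) (L₁ A : Ω → ℝ),
      VersionCounterexampleSpec Ω Po Ps L₁ A := by
  classical
  refine ⟨Bool × Bool, inferInstance, Pm false, Pm true, CL₁, CA, ?_⟩
  unfold VersionCounterexampleSpec
  have hce := condexp_eq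
  refine ⟨inferInstance, inferInstance, .of_discrete, .of_discrete,
    fun ω => by cases h : ω.1 <;> simp [CL₁, h],
    fun ω => by cases h : ω.2 <;> simp [CA, h],
    ae_Pm (by norm_num [CA]) (by norm_num [CA]),
    ae_Pm (by norm_num [CA]) (by norm_num [CA]),
    by simpa [CL₁] using Pm_L1 false false,
    by simpa [CL₁] using Pm_L1 false true,
    by simpa [CL₁] using Pm_L1 true false,
    by simpa [CL₁] using Pm_L1 true true,
    ⟨fun p => p.1 + p.2, measurable_fst.add measurable_snd, ?_, ?_⟩,
    ?_, ?_, ?_, ?_, ?_, ?_⟩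
  · rw [condexp_eq]
  · rw [condexp_eq]
  · rw [condexp_eq]
    exact ae_Pm (by norm_num [CL₁, CA]) (by norm_num [CL₁, CA])
  · rw [condexp_eq]
    exact ae_Pm (by norm_num [CL₁, CA]) (by norm_num [CL₁, CA])
  · exact ae_Pm (by norm_num [CL₁, CA]) (by norm_num [CL₁, CA])
  · exact ae_Pm (by norm_num [CL₁, CA]) (by norm_num [CL₁, CA])
  · intro h
    rw [condexp_eq] at h
    have h2 : (fun ω => if CA ω = 0 then (2:ℝ) else CL₁ ω + 1) =ᵐ[Pm true]
        (fun ω => CL₁ ω + CA ω) :=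
      ae_Pm (by norm_num [CL₁, CA]) (by norm_num [CL₁, CA])
    have hne : ∀ᵐ ω ∂(Pm true), ¬ ((fun ω => if CA ω = 0 then CL₁ ω else (0:ℝ)) ω
        = (fun ω => if CA ω = 0 then (2:ℝ) else CL₁ ω + 1) ω) :=
      ae_Pm (by norm_num [CL₁, CA]) (by norm_num [CL₁, CA])
    haveI : (ae (Pm true)).NeBot := ae_neBot.mpr (IsProbabilityMeasure.ne_zero _)
    obtain ⟨ω, he, hn⟩ := ((h.trans h2.symm).and hne).exists
    exact hn he
  · intro h
    rw [condexp_eq] at h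
    have h2 : (fun ω => if CA ω = 0 then CL₁ ω else (0:ℝ)) =ᵐ[Pm false]
        (fun ω => CL₁ ω + CA ω) :=
      ae_Pm (by norm_num [CL₁, CA]) (by norm_num [CL₁, CA])
    have hne : ∀ᵐ ω ∂(Pm false), ¬ ((fun ω => if CA ω = 0 then CL₁ ω else (0:ℝ)) ω
        = (fun ω => if CA ω = 0 then (2:ℝ) else CL₁ ω + 1) ω) :=
      ae_Pm (by norm_num [CL₁, CA]) (by norm_num [CL₁, CA])
    haveI : (ae (Pm false)).NeBot := ae_neBot.mpr (IsProbabilityMeasure.ne_zero _)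
    obtain ⟨ω, he, hn⟩ := ((h.trans h2.symm).and hne).exists
    exact hn he.symm
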